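/- Let n ≥ 3 and let G_{n-1} be the (n-1)-variable geometric mean, G_{n-1}(y) = (y_1 ⋯ y_{n-1})^{1/(n-1)}. For any tuple X : Fin n → ℝ of positive reals, the iteration X⁰ = X, X^{k+1}_i = G_{n-1}(X^k with i-th coordinate deleted) converges coordinatewise, and each coordinate sequence converges to the n-variable geometric mean (X_1 ⋯ X_n)^{1/n}. -/

import Mathlib

open Filter Topology

/-- For `n = m + 1 ≥ 3`, the deletion iteration associated to the `(n-1)`-variable
geometric mean converges in every coordinate to the `n`-variable geometric mean. -/
theorem deletion_iteration_geom_mean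
    (m : ℕ) (hm : 2 ≤ m)
    (X : Fin (m + 1) → ℝ) (hX : ∀ i, 0 < X i)
    (Y : ℕ → Fin (m + 1) → ℝ) (hY0 : Y 0 = X)
    (hYrec : ∀ k (i : Fin (m + 1)),
      Y (k + 1) i = (∏ j : Fin m, Y k (i.succAbove j)) ^ ((m : ℝ)⁻¹)) :
    ∀ i, Tendsto (fun k => Y k i) atTop (𝓝 ((∏ j, X j) ^ (((m : ℝ) + 1)⁻¹))) := by
  have hm0 : (0:ℝ) < m := by positivity
  -- positivity of the iterates
  have hpos : ∀ k i, 0 < Y k i := by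
    intro k
    induction k with
    | zero => intro i; rw [hY0]; exact hX i
    | succ k ih =>
      intro i
      rw [hYrec]
      exact Real.rpow_pos_of_pos (Finset.prod_pos fun j _ => ih _) _
  set S : ℝ := ∑ j, Real.log (X j) with hS
  set c : ℝ := S / (m + 1) with hc
  set r : ℝ := -(m:ℝ)⁻¹ with hr
  set d : Fin (m+1) → ℝ := fun i => Real.log (X i) - c with hd
  have hsumd : ∑ j, d j = 0 := by
    simp only [hd, Finset.sum_sub_distrib, ← hS, Finset.sum_const, Finset.card_univ,
      Fintype.card_fin, nsmul_eq_mul, hc]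
    field_simp
    push_cast; ring
  have key : ∀ k i, Real.log (Y k i) = c + r ^ k * d i := by
    intro k
    induction k with
    | zero => intro i; simp [hY0, hd]
    | succ k ih =>
      intro i
      rw [hYrec, Real.log_rpow (Finset.prod_pos fun j _ => hpos _ _),
        Real.log_prod (fun j _ => (hpos _ _).ne')]
      have hall : ∑ j : Fin (m+1), Real.log (Y k j)
          = (m+1) * c + r ^ k * ∑ j, d j := by
        simp only [ih, Finset.sum_add_distrib, Finset.sum_const, Finset.card_univ,
          Fintype.card_fin, nsmul_eq_mul, ← Finset.mul_sum]
        push_cast; ring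
      have hdel : ∑ j : Fin m, Real.log (Y k (i.succAbove j))
          = (∑ j : Fin (m+1), Real.log (Y k j)) - Real.log (Y k i) := by
        rw [Fin.sum_univ_succAbove (fun j => Real.log (Y k j)) i]; ring
      rw [hdel, hall, hsumd, ih i, hr]
      field_simp
      linear_combination ((m:ℝ)⁻¹ ^ k * d i * (-1) ^ k) * (mul_inv_cancel₀ hm0.ne' : (m:ℝ) * (m:ℝ)⁻¹ = 1)
  intro i
  have habs : |r| < 1 := by
    rw [hr, abs_neg, abs_inv, abs_of_pos hm0]
    rw [inv_lt_one_iff₀]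
    right; exact_mod_cast lt_of_lt_of_le one_lt_two hm
  have hrlim : Tendsto (fun k => r ^ k) atTop (𝓝 0) :=
    tendsto_pow_atTop_nhds_zero_of_abs_lt_one habs
  have hY_eq : ∀ k, Y k i = Real.exp (c + r ^ k * d i) := by
    intro k; rw [← key k i, Real.exp_log (hpos k i)]
  have hlim : Tendsto (fun k => Real.exp (c + r ^ k * d i)) atTop (𝓝 (Real.exp c)) := by
    have : Tendsto (fun k => c + r ^ k * d i) atTop (𝓝 (c + 0 * d i)) :=
      (tendsto_const_nhds.add (hrlim.mul tendsto_const_nhds))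
    simpa [Function.comp_def] using (Real.continuous_exp.continuousAt.tendsto.comp this)
  have hexp : Real.exp c = (∏ j, X j) ^ (((m : ℝ) + 1)⁻¹) := by
    rw [Real.rpow_def_of_pos (Finset.prod_pos fun j _ => hX j),
      Real.log_prod (fun j _ => (hX j).ne'), hc, ← hS]
    congr 1
  rw [← hexp]
  simpa only [← hY_eq] using hlim
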